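/- Let Φ and Ψ be Følner sequences in a countable abelian group G. If lim inf |Ψ_N|/|Φ_N| > 0, lim sup |Ψ_N|/|Φ_N| < ∞, and lim inf |Φ_N ∩ Ψ_N| / |Ψ_N| > 0, then N ↦ Φ_N ∩ Ψ_N is also a Følner sequence in G. -/

import Mathlib

open Filter Pointwise
open scoped Classical

/-- The doubling map `g ↦ g + g` as an additive homomorphism. -/
def doubleHom (G : Type*) [AddCommGroup G] : G →+ G where
  toFun g := g + g
  map_zero' := by simp
  map_add' := by intro a b; abel

/-- The subgroup `2G = {g + g : g ∈ G}`. -/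
def twoG (G : Type*) [AddCommGroup G] : AddSubgroup G := (doubleHom G).range

/-- A Følner sequence: finite sets with `|Φ_N ∩ (g + Φ_N)|/|Φ_N| → 1` for every `g`. -/
def IsFolner {G : Type*} [AddCommGroup G] (Φ : ℕ → Finset G) : Prop :=
  ∀ g : G, Tendsto
    (fun N => (((Φ N) ∩ (Φ N).image (fun x => g + x)).card : ℝ) / ((Φ N).card : ℝ))
    atTop (nhds 1)

lemma real_ineq (p q w a b t c1 c3 : ℝ) (hp : 0 < p) (hq : 0 < q) (hw : 0 < w)
    (hc1 : 0 < c1) (hc3 : 0 < c3) (h1 : c1 * p ≤ q) (h3 : c3 * q ≤ w)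
    (ha : 0 ≤ a) (ha' : a ≤ p) (hb : 0 ≤ b) (hb' : b ≤ q)
    (hkey : w - t ≤ (p - a) + (q - b)) :
    1 - ((1 - a/p)*(c3*c1)⁻¹ + (1 - b/q)*c3⁻¹) ≤ t/w := by
  have hX : (p - a)/w ≤ (1 - a/p)*(c3*c1)⁻¹ := by
    have h4 : c3 * c1 * p ≤ w := by nlinarith
    calc (p - a)/w ≤ (p - a)/(c3*c1*p) :=
          div_le_div_of_nonneg_left (by linarith) (by positivity) h4
      _ = (1 - a/p)*(c3*c1)⁻¹ := by field_simp
  have hY : (q - b)/w ≤ (1 - b/q)*c3⁻¹ := by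
    calc (q - b)/w ≤ (q - b)/(c3*q) :=
          div_le_div_of_nonneg_left (by linarith) (by positivity) h3
      _ = (1 - b/q)*c3⁻¹ := by field_simp
  have : (w - t)/w ≤ (p-a)/w + (q-b)/w := by
    rw [← add_div]; exact div_le_div_of_nonneg_right hkey hw.le |>.trans_eq rfl
  have ht : 1 - t/w = (w - t)/w := by field_simp
  linarith

lemma card_ineq {G : Type*} [AddCommGroup G] (g : G) (A B : Finset G) :
    ((A ∩ B).card : ℝ) - (((A ∩ B) ∩ (A ∩ B).image (fun x => g + x)).card : ℝ) ≤
      ((A.card : ℝ) - ((A ∩ A.image (fun x => g + x)).card : ℝ)) +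
      ((B.card : ℝ) - ((B ∩ B.image (fun x => g + x)).card : ℝ)) := by
  have hsub : (A ∩ B) \ (A ∩ B).image (fun x => g + x) ⊆
      (A \ A.image (fun x => g + x)) ∪ (B \ B.image (fun x => g + x)) := by
    intro x hx
    simp only [Finset.mem_sdiff, Finset.mem_union, Finset.mem_inter, Finset.mem_image,
      not_exists, not_and] at hx ⊢
    obtain ⟨⟨hxA, hxB⟩, hn⟩ := hx
    by_cases hA : ∃ y ∈ A, g + y = x
    · obtain ⟨y, hyA, hyx⟩ := hA
      right
      refine ⟨hxB, fun z hzB hzx => ?_⟩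
      have : z = y := by
        have := hzx.trans hyx.symm
        exact add_left_cancel this
      subst this
      exact hn z ⟨hyA, hzB⟩ hzx
    · push_neg at hA
      exact Or.inl ⟨hxA, fun y hy => hA y hy⟩
  have key : ((A ∩ B) \ (A ∩ B).image (fun x => g + x)).card ≤
      (A \ A.image (fun x => g + x)).card + (B \ B.image (fun x => g + x)).card :=
    (Finset.card_le_card hsub).trans (Finset.card_union_le _ _)
  have e : ∀ (S : Finset G), (S \ S.image (fun x => g + x)).card
      = S.card - (S ∩ S.image (fun x => g + x)).card := by
    intro S
    rw [← Finset.sdiff_inter_self_left S (S.image (fun x => g + x)),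
      Finset.card_sdiff_of_subset (Finset.inter_subset_left)]
  rw [e, e, e] at key
  have hA : (A ∩ A.image (fun x => g + x)).card ≤ A.card := Finset.card_le_card Finset.inter_subset_left
  have hB : (B ∩ B.image (fun x => g + x)).card ≤ B.card := Finset.card_le_card Finset.inter_subset_left
  have hAB : ((A ∩ B) ∩ (A ∩ B).image (fun x => g + x)).card ≤ (A ∩ B).card :=
    Finset.card_le_card Finset.inter_subset_left
  push_cast [← Nat.cast_sub hA, ← Nat.cast_sub hB, ← Nat.cast_sub hAB]
  exact_mod_cast key

theorem stmt6' (G : Type*) [AddCommGroup G] [Countable G] (Φ Ψ : ℕ → Finset G)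
    (hΦ : ∀ g : G, Tendsto (fun N => (((Φ N) ∩ (Φ N).image (fun x => g + x)).card : ℝ) / ((Φ N).card : ℝ)) atTop (nhds 1))
    (hΨ : ∀ g : G, Tendsto (fun N => (((Ψ N) ∩ (Ψ N).image (fun x => g + x)).card : ℝ) / ((Ψ N).card : ℝ)) atTop (nhds 1))
    (h1 : 0 < Filter.liminf (fun N => ((Ψ N).card : ℝ) / ((Φ N).card : ℝ)) atTop)
    (h2 : IsBoundedUnder (· ≤ ·) atTop (fun N => ((Ψ N).card : ℝ) / ((Φ N).card : ℝ)))
    (h3 : 0 < Filter.liminf (fun N => ((Φ N ∩ Ψ N).card : ℝ) / ((Ψ N).card : ℝ)) atTop) :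
    ∀ g : G, Tendsto (fun N => ((((Φ N ∩ Ψ N)) ∩ (Φ N ∩ Ψ N).image (fun x => g + x)).card : ℝ) / ((Φ N ∩ Ψ N).card : ℝ)) atTop (nhds 1) := by
  set c1 := liminf (fun N => ((Ψ N).card : ℝ) / ((Φ N).card : ℝ)) atTop / 2 with hc1def
  set c3 := liminf (fun N => ((Φ N ∩ Ψ N).card : ℝ) / ((Ψ N).card : ℝ)) atTop / 2 with hc3def
  have hc1 : 0 < c1 := by positivity
  have hc3 : 0 < c3 := by positivity
  have hE1 : ∀ᶠ N in atTop, c1 < ((Ψ N).card : ℝ) / ((Φ N).card : ℝ) :=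
    eventually_lt_of_lt_liminf (by linarith) (isBoundedUnder_of ⟨0, fun N => by positivity⟩)
  have hE3 : ∀ᶠ N in atTop, c3 < ((Φ N ∩ Ψ N).card : ℝ) / ((Ψ N).card : ℝ) := by
    exact eventually_lt_of_lt_liminf (by linarith) (isBoundedUnder_of ⟨0, fun N => by positivity⟩)
  have hpos : ∀ (S : ℕ → Finset G)
      (h : Tendsto (fun N => (((S N) ∩ (S N).image (fun x => (0:G) + x)).card : ℝ) / ((S N).card : ℝ)) atTop (nhds 1)),
      ∀ᶠ N in atTop, 0 < ((S N).card : ℝ) := by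
    intro S h
    filter_upwards [h.eventually (lt_mem_nhds (show (0:ℝ) < 1 by norm_num))] with N hN
    by_contra hc
    push_neg at hc
    have : ((S N).card : ℝ) = 0 := le_antisymm hc (Nat.cast_nonneg _)
    rw [this, div_zero] at hN
    exact lt_irrefl _ hN
  have hPφ := hpos Φ (hΦ 0)
  have hPψ := hpos Ψ (hΨ 0)
  intro g
  set rΦ := fun N => (((Φ N) ∩ (Φ N).image (fun x => g + x)).card : ℝ) / ((Φ N).card : ℝ)
  set rΨ := fun N => (((Ψ N) ∩ (Ψ N).image (fun x => g + x)).card : ℝ) / ((Ψ N).card : ℝ)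
  have hlow : Tendsto (fun N => 1 - ((1 - rΦ N) * (c3*c1)⁻¹ + (1 - rΨ N) * c3⁻¹)) atTop (nhds 1) := by
    have : Tendsto (fun N => 1 - ((1 - rΦ N) * (c3*c1)⁻¹ + (1 - rΨ N) * c3⁻¹)) atTop
        (nhds (1 - (((1:ℝ) - 1) * (c3*c1)⁻¹ + ((1:ℝ) - 1) * c3⁻¹))) :=
      tendsto_const_nhds.sub (((tendsto_const_nhds.sub (hΦ g)).mul_const _).add
        ((tendsto_const_nhds.sub (hΨ g)).mul_const _))
    simpa using this
  refine tendsto_of_tendsto_of_tendsto_of_le_of_le' hlow tendsto_const_nhds ?_ ?_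
  · filter_upwards [hE1, hE3, hPφ, hPψ] with N e1 e3 pφ pψ
    have h1' : c1 * ((Φ N).card : ℝ) ≤ ((Ψ N).card : ℝ) := by
      rw [lt_div_iff₀ pφ] at e1; linarith
    have h3' : c3 * ((Ψ N).card : ℝ) ≤ ((Φ N ∩ Ψ N).card : ℝ) := by
      rw [lt_div_iff₀ pψ] at e3; linarith
    have pω : 0 < ((Φ N ∩ Ψ N).card : ℝ) := lt_of_lt_of_le (by positivity) h3'
    have := real_ineq ((Φ N).card : ℝ) ((Ψ N).card : ℝ) ((Φ N ∩ Ψ N).card : ℝ)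
      (((Φ N) ∩ (Φ N).image (fun x => g + x)).card : ℝ)
      (((Ψ N) ∩ (Ψ N).image (fun x => g + x)).card : ℝ)
      ((((Φ N ∩ Ψ N)) ∩ (Φ N ∩ Ψ N).image (fun x => g + x)).card : ℝ)
      c1 c3 pφ pψ pω hc1 hc3 h1' h3'
      (Nat.cast_nonneg _)
      (by exact_mod_cast Finset.card_le_card Finset.inter_subset_left)
      (Nat.cast_nonneg _)
      (by exact_mod_cast Finset.card_le_card Finset.inter_subset_left)
      (card_ineq g (Φ N) (Ψ N))
    simp only [rΦ, rΨ]
    convert this using 2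
  · exact Eventually.of_forall fun N =>
      div_le_one_of_le₀ (by exact_mod_cast Finset.card_le_card Finset.inter_subset_left)
        (Nat.cast_nonneg _)


theorem stmt6 (G : Type*) [AddCommGroup G] [Countable G] (Φ Ψ : ℕ → Finset G)
    (hΦ : IsFolner Φ) (hΨ : IsFolner Ψ)
    (h1 : 0 < Filter.liminf (fun N => ((Ψ N).card : ℝ) / ((Φ N).card : ℝ)) atTop)
    (h2 : IsBoundedUnder (· ≤ ·) atTop (fun N => ((Ψ N).card : ℝ) / ((Φ N).card : ℝ)))
    (h3 : 0 < Filter.liminf (fun N => ((Φ N ∩ Ψ N).card : ℝ) / ((Ψ N).card : ℝ)) atTop) :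
    IsFolner (fun N => Φ N ∩ Ψ N) :=
  stmt6' G Φ Ψ hΦ hΨ h1 h2 h3
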